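/- Along a solution of the backward equation ∂ℓ(t,·) = K̂ℓ(t,·) with ℓ(t,·) : S → (0,∞), the Φ-relative entropy H^Φ(t) := ∑_x q(x) Φ(ℓ(t,x)) satisfies the generalized de Bruijn identity ∂H^Φ(t) = -E(ℓ_t, φ(ℓ_t)), where φ = Φ' and E(f,g) = -∑_{x,y} q(y)κ(y,x)f(y)g(x); in particular H^Φ is non-increasing. -/

import Mathlib

/-- Support-line inequality for a convex differentiable function on `(0,∞)`. -/
lemma deBruijn_support_line {Φ φ : ℝ → ℝ}
    (hΦ : ConvexOn ℝ (Set.Ioi (0:ℝ)) Φ)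
    (hφ : ∀ x : ℝ, 0 < x → HasDerivAt Φ (φ x) x)
    {a b : ℝ} (ha : 0 < a) (hb : 0 < b) :
    φ b * (a - b) ≤ Φ a - Φ b := by
  rcases lt_trichotomy a b with h | h | h
  · have := hΦ.slope_le_of_hasDerivAt (Set.mem_Ioi.2 ha) (Set.mem_Ioi.2 hb) h (hφ b hb)
    rw [slope_def_field, div_le_iff₀ (by linarith)] at this
    nlinarith
  · simp [h]
  · have := hΦ.le_slope_of_hasDerivAt (Set.mem_Ioi.2 hb) (Set.mem_Ioi.2 ha) h (hφ b hb)
    rw [slope_def_field, le_div_iff₀ (by linarith)] at this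
    nlinarith

theorem generalized_de_bruijn
    {S : Type*} [Fintype S] (κ : S → S → ℝ) (q : S → ℝ)
    (Φ φ : ℝ → ℝ) (ℓ : ℝ → S → ℝ)
    (hκ_off : ∀ x y, x ≠ y → 0 ≤ κ x y)
    (hκ_row : ∀ x, ∑ y, κ x y = 0)
    (hq_pos : ∀ x, 0 < q x)
    (hq_sum : ∑ x, q x = 1)
    (hq_inv : ∀ x, ∑ y, q y * κ y x = 0)
    (hΦ : ConvexOn ℝ (Set.Ioi (0:ℝ)) Φ)
    (hΦ1 : Φ 1 = 0)
    (hφ : ∀ x : ℝ, 0 < x → HasDerivAt Φ (φ x) x)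
    (hφc : ContinuousOn φ (Set.Ioi (0:ℝ)))
    (hℓ_pos : ∀ t x, 0 < ℓ t x)
    (hℓ : ∀ t x, HasDerivAt (fun s => ℓ s x)
        (∑ y, (q y / q x) * κ y x * ℓ t y) t) :
    (∀ t, HasDerivAt (fun s => ∑ x, q x * Φ (ℓ s x))
        (-(-(∑ x, ∑ y, q y * κ y x * ℓ t y * φ (ℓ t x)))) t)
    ∧ Antitone (fun t => ∑ x, q x * Φ (ℓ t x)) := by
  have hderiv : ∀ t, HasDerivAt (fun s => ∑ x, q x * Φ (ℓ s x))
      (∑ x, ∑ y, q y * κ y x * ℓ t y * φ (ℓ t x)) t := by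
    intro t
    have h1 : ∀ x : S, HasDerivAt (fun s => q x * Φ (ℓ s x))
        (∑ y, q y * κ y x * ℓ t y * φ (ℓ t x)) t := by
      intro x
      have hx : HasDerivAt (fun s => Φ (ℓ s x))
          (φ (ℓ t x) * ∑ y, (q y / q x) * κ y x * ℓ t y) t :=
        (hφ (ℓ t x) (hℓ_pos t x)).comp t (hℓ t x)
      have := hx.const_mul (q x)
      refine this.congr_deriv ?_
      rw [Finset.mul_sum, Finset.mul_sum]
      refine Finset.sum_congr rfl fun y _ => ?_
      have h0 : q x ≠ 0 := (hq_pos x).ne'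
      field_simp
    have := HasDerivAt.fun_sum (u := Finset.univ) (fun x _ => h1 x)
    simpa using this
  refine ⟨fun t => by simpa using hderiv t, ?_⟩
  have hnonpos : ∀ t, (∑ x, ∑ y, q y * κ y x * ℓ t y * φ (ℓ t x)) ≤ 0 := by
    intro t
    set ψ : ℝ → ℝ := fun u => Φ u - u * φ u with hψ
    have key : ∀ x y : S, q y * κ y x * ℓ t y * φ (ℓ t x)
        ≤ q y * κ y x * (ℓ t y * φ (ℓ t y) + ψ (ℓ t y) - ψ (ℓ t x)) := by
      intro x y
      rcases eq_or_ne x y with rfl | hxy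
      · exact le_of_eq (by simp [hψ]; ring)
      · have hc : 0 ≤ q y * κ y x := mul_nonneg (hq_pos y).le (hκ_off y x (Ne.symm hxy))
        have hs := deBruijn_support_line hΦ hφ (hℓ_pos t y) (hℓ_pos t x)
        have : ℓ t y * φ (ℓ t x) ≤ ℓ t y * φ (ℓ t y) + ψ (ℓ t y) - ψ (ℓ t x) := by
          simp only [hψ]; nlinarith
        calc q y * κ y x * ℓ t y * φ (ℓ t x)
            = q y * κ y x * (ℓ t y * φ (ℓ t x)) := by ring
          _ ≤ q y * κ y x * (ℓ t y * φ (ℓ t y) + ψ (ℓ t y) - ψ (ℓ t x)) :=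
            mul_le_mul_of_nonneg_left this hc
    have hsum_le : (∑ x, ∑ y, q y * κ y x * ℓ t y * φ (ℓ t x))
        ≤ ∑ x, ∑ y, q y * κ y x * (ℓ t y * φ (ℓ t y) + ψ (ℓ t y) - ψ (ℓ t x)) :=
      Finset.sum_le_sum fun x _ => Finset.sum_le_sum fun y _ => key x y
    have hzero : (∑ x : S, ∑ y, q y * κ y x * (ℓ t y * φ (ℓ t y) + ψ (ℓ t y) - ψ (ℓ t x))) = 0 := by
      have e1 : (∑ x : S, ∑ y, q y * κ y x * (ℓ t y * φ (ℓ t y) + ψ (ℓ t y))) = 0 := by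
        rw [Finset.sum_comm]
        refine Finset.sum_eq_zero fun y _ => ?_
        have : (∑ x, q y * κ y x * (ℓ t y * φ (ℓ t y) + ψ (ℓ t y)))
            = (q y * (ℓ t y * φ (ℓ t y) + ψ (ℓ t y))) * ∑ x, κ y x := by
          rw [Finset.mul_sum]; exact Finset.sum_congr rfl fun x _ => by ring
        rw [this, hκ_row y, mul_zero]
      have e2 : (∑ x : S, ∑ y, q y * κ y x * ψ (ℓ t x)) = 0 := by
        refine Finset.sum_eq_zero fun x _ => ?_
        have : (∑ y, q y * κ y x * ψ (ℓ t x)) = (∑ y, q y * κ y x) * ψ (ℓ t x) := by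
          rw [Finset.sum_mul]
        rw [this, hq_inv x, zero_mul]
      have : (∑ x : S, ∑ y, q y * κ y x * (ℓ t y * φ (ℓ t y) + ψ (ℓ t y) - ψ (ℓ t x)))
          = (∑ x : S, ∑ y, q y * κ y x * (ℓ t y * φ (ℓ t y) + ψ (ℓ t y)))
            - ∑ x : S, ∑ y, q y * κ y x * ψ (ℓ t x) := by
        rw [← Finset.sum_sub_distrib]
        refine Finset.sum_congr rfl fun x _ => ?_
        rw [← Finset.sum_sub_distrib]
        exact Finset.sum_congr rfl fun y _ => by ring
      rw [this, e1, e2, sub_zero]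
    linarith
  have hdiff : Differentiable ℝ (fun s => ∑ x, q x * Φ (ℓ s x)) :=
    fun t => (hderiv t).differentiableAt
  refine antitone_of_deriv_nonpos hdiff fun t => ?_
  rw [(hderiv t).deriv]
  exact hnonpos t
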